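/- The four Schubert derivations σ_+(z), σ̄_+(z), σ_-(z), σ̄_-(z) on the exterior algebra ⋀M are mutually commuting operators (as formal power series of endomorphisms of ⋀M). -/

import Mathlib

open ExteriorAlgebra

noncomputable section

abbrev M : Type := ℤ →₀ ℤ
def b (i : ℤ) : M := Finsupp.single i 1
abbrev A : Type := ExteriorAlgebra ℤ M

/-- Hasse–Schmidt derivation on `⋀M`, coefficientwise. -/
def IsHS (D : ℕ → Module.End ℤ A) : Prop :=
  ∀ (n : ℕ) (u w : A), D n (u * w) = ∑ j ∈ Finset.range (n + 1), D j u * D (n - j) w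

/-- `c` lists the coefficients of the Schubert derivation `σ₊(z)`:
`σ₊(z) bⱼ = ∑_{i≥0} b_{j+i} z^i`. -/
def IsSigmaPlus (c : ℕ → Module.End ℤ A) : Prop :=
  IsHS c ∧ c 0 = 1 ∧ ∀ (n : ℕ) (j : ℤ), c n (ι ℤ (b j)) = ι ℤ (b (j + n))

/-- `c` lists the coefficients (in `z^{-i}`) of `σ₋(z)`: `σ₋(z) bⱼ = ∑_{i≥0} b_{j-i} z^{-i}`. -/
def IsSigmaMinus (c : ℕ → Module.End ℤ A) : Prop :=
  IsHS c ∧ c 0 = 1 ∧ ∀ (n : ℕ) (j : ℤ), c n (ι ℤ (b j)) = ι ℤ (b (j - n))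

/-- `c` lists the coefficients of `σ̄₊(z)`, characterized by `σ̄₊(z) bⱼ = bⱼ − b_{j+1} z`. -/
def IsSigmaBarPlus (c : ℕ → Module.End ℤ A) : Prop :=
  IsHS c ∧ c 0 = 1 ∧ (∀ j : ℤ, c 1 (ι ℤ (b j)) = -(ι ℤ (b (j + 1)))) ∧
    ∀ n : ℕ, 2 ≤ n → ∀ j : ℤ, c n (ι ℤ (b j)) = 0

/-- `c` lists the coefficients (in `z^{-i}`) of `σ̄₋(z)`, characterized by
`σ̄₋(z) bⱼ = bⱼ − b_{j-1} z^{-1}`. -/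
def IsSigmaBarMinus (c : ℕ → Module.End ℤ A) : Prop :=
  IsHS c ∧ c 0 = 1 ∧ (∀ j : ℤ, c 1 (ι ℤ (b j)) = -(ι ℤ (b (j - 1)))) ∧
    ∀ n : ℕ, 2 ≤ n → ∀ j : ℤ, c n (ι ℤ (b j)) = 0

lemma hs_one {c : ℕ → Module.End ℤ A} (hc : IsHS c) (hc0 : c 0 = 1) :
    ∀ n : ℕ, 0 < n → c n (1 : A) = 0 := by
  intro n
  induction n using Nat.strong_induction_on with
  | _ n ih =>
    intro hn
    have h := hc n 1 1
    rw [one_mul] at h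
    have hsum : ∑ a ∈ Finset.range (n + 1), c a (1:A) * c (n - a) (1:A)
        = c n (1:A) + c n (1:A) := by
      rw [Finset.sum_range_succ, Finset.sum_eq_single_of_mem 0
        (Finset.mem_range.mpr (by omega))
        (fun k hk hk0 => by
          have : c k (1:A) = 0 := ih k (Finset.mem_range.mp hk) (Nat.pos_of_ne_zero hk0)
          rw [this, zero_mul])]
      simp [hc0]
    rw [hsum] at h
    exact left_eq_add.mp h

lemma hs_comm {c d : ℕ → Module.End ℤ A} (hc : IsHS c) (hc0 : c 0 = 1)
    (hd : IsHS d) (hd0 : d 0 = 1) (εc εd sc sd : ℕ → ℤ)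
    (hcg : ∀ (n : ℕ) (k : ℤ), c n (ι ℤ (b k)) = εc n • ι ℤ (b (k + sc n)))
    (hdg : ∀ (n : ℕ) (k : ℤ), d n (ι ℤ (b k)) = εd n • ι ℤ (b (k + sd n))) :
    ∀ (x : A) (i j : ℕ), c i (d j x) = d j (c i x) := by
  intro x
  induction x using ExteriorAlgebra.induction with
  | algebraMap r =>
    intro i j
    rw [Algebra.algebraMap_eq_smul_one, map_smul, map_smul, map_smul, map_smul]
    congr 1
    rcases Nat.eq_zero_or_pos j with hj | hj
    · subst hj; rw [hd0]; simp
    · rw [hs_one hd hd0 j hj, map_zero]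
      rcases Nat.eq_zero_or_pos i with hi | hi
      · subst hi; rw [hc0]; simp [hs_one hd hd0 j hj]
      · rw [hs_one hc hc0 i hi, map_zero]
  | ι m =>
    induction m using Finsupp.induction_linear with
    | zero => intro i j; simp
    | add f g hf hg => intro i j; simp only [map_add]; rw [hf, hg]
    | single k t =>
      intro i j
      have hsingle : (Finsupp.single k t : M) = t • b k := by
        rw [b, Finsupp.smul_single, smul_eq_mul, mul_one]
      rw [hsingle, map_smul, map_smul, map_smul, map_smul, map_smul]
      congr 1
      simp only [hdg, hcg, map_smul, smul_smul]
      have h1 : k + sd j + sc i = k + sc i + sd j := by ring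
      rw [h1, mul_comm]
  | mul u w hu hw =>
    intro i j
    calc c i (d j (u * w))
        = ∑ bb ∈ Finset.range (j+1), ∑ a ∈ Finset.range (i+1),
            c a (d bb u) * c (i-a) (d (j-bb) w) := by
          rw [hd j u w, map_sum]
          exact Finset.sum_congr rfl fun bb _ => hc i _ _
      _ = ∑ bb ∈ Finset.range (j+1), ∑ a ∈ Finset.range (i+1),
            d bb (c a u) * d (j-bb) (c (i-a) w) := by
          refine Finset.sum_congr rfl fun bb _ => Finset.sum_congr rfl fun a _ => ?_
          rw [hu a bb, hw (i-a) (j-bb)]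
      _ = ∑ a ∈ Finset.range (i+1), ∑ bb ∈ Finset.range (j+1),
            d bb (c a u) * d (j-bb) (c (i-a) w) := Finset.sum_comm
      _ = d j (c i (u * w)) := by
          rw [hc i u w, map_sum]
          exact Finset.sum_congr rfl fun a _ => (hd j _ _).symm
  | add u w hu hw =>
    intro i j
    simp only [map_add]
    rw [hu, hw]

lemma props {sp sbp sm sbm : ℕ → Module.End ℤ A}
    (hsp : IsSigmaPlus sp) (hsbp : IsSigmaBarPlus sbp)
    (hsm : IsSigmaMinus sm) (hsbm : IsSigmaBarMinus sbm)
    (c : ℕ → Module.End ℤ A) (h : c = sp ∨ c = sbp ∨ c = sm ∨ c = sbm) :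
    IsHS c ∧ c 0 = 1 ∧ ∃ ε s : ℕ → ℤ,
      ∀ (n : ℕ) (k : ℤ), c n (ι ℤ (b k)) = ε n • ι ℤ (b (k + s n)) := by
  rcases h with rfl | rfl | rfl | rfl
  · exact ⟨hsp.1, hsp.2.1, fun _ => 1, fun n => n, fun n k => by
      rw [hsp.2.2 n k]; simp⟩
  · refine ⟨hsbp.1, hsbp.2.1, fun n => if n = 0 then 1 else if n = 1 then -1 else 0,
      fun n => n, fun n k => ?_⟩
    match n with
    | 0 => rw [hsbp.2.1]; simp
    | 1 => rw [hsbp.2.2.1 k]; norm_num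
    | (m+2) => rw [hsbp.2.2.2 (m+2) (by omega) k]; simp [Nat.succ_ne_zero]
  · exact ⟨hsm.1, hsm.2.1, fun _ => 1, fun n => -n, fun n k => by
      rw [hsm.2.2 n k]; simp [sub_eq_add_neg]⟩
  · refine ⟨hsbm.1, hsbm.2.1, fun n => if n = 0 then 1 else if n = 1 then -1 else 0,
      fun n => -(n : ℤ), fun n k => ?_⟩
    match n with
    | 0 => rw [hsbm.2.1]; simp
    | 1 => rw [hsbm.2.2.1 k]; norm_num [sub_eq_add_neg]
    | (m+2) => rw [hsbm.2.2.2 (m+2) (by omega) k]; simp [Nat.succ_ne_zero]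

/-- The four Schubert derivations `σ₊(z), σ̄₊(z), σ₋(z), σ̄₋(z)` on `⋀M` are mutually
commuting, i.e. all their coefficients commute pairwise in `End(⋀M)`. -/
theorem stmt6 (sp sbp sm sbm : ℕ → Module.End ℤ A)
    (hsp : IsSigmaPlus sp) (hsbp : IsSigmaBarPlus sbp)
    (hsm : IsSigmaMinus sm) (hsbm : IsSigmaBarMinus sbm) :
    ∀ c d : ℕ → Module.End ℤ A,
      (c = sp ∨ c = sbp ∨ c = sm ∨ c = sbm) →
      (d = sp ∨ d = sbp ∨ d = sm ∨ d = sbm) →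
      ∀ i j : ℕ, Commute (c i) (d j) := by
  intro c d hcm hdm i j
  obtain ⟨hcHS, hc0, εc, sc, hcg⟩ := props hsp hsbp hsm hsbm c hcm
  obtain ⟨hdHS, hd0, εd, sd, hdg⟩ := props hsp hsbp hsm hsbm d hdm
  show c i * d j = d j * c i
  exact LinearMap.ext fun x => hs_comm hcHS hc0 hdHS hd0 εc εd sc sd hcg hdg x i j
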